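/- Let x = (x₁,…,xₙ) and y = (y₁,…,yₙ) be decreasing vectors of nonnegative real numbers. Then y is majorized by x (i.e., Σ_{i=1}^k y_i ≤ Σ_{i=1}^k x_i for all k ∈ {1,…,n−1} and Σ_{i=1}^n y_i = Σ_{i=1}^n x_i) if and only if y lies in the permutohedron K_{Sₙ}(x), the convex hull in ℝⁿ of the set {σx : σ ∈ Sₙ}, where (σx)_i = x_{σ⁻¹(i)}. -/

import Mathlib

open Finset

private lemma sum_range_dite_eq_sum_filter {n : ℕ} (f : Fin n → ℝ) (k : ℕ) (hk : k ≤ n) :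
    ∑ i ∈ Finset.univ.filter (fun i : Fin n => (i : ℕ) < k), f i
      = ∑ j ∈ Finset.range k, (if h : j < n then f ⟨j, h⟩ else 0) := by
  rw [Finset.sum_filter]
  have h1 : ∑ i : Fin n, (if (i : ℕ) < k then f i else 0)
      = ∑ j ∈ Finset.range n,
          (if h : j < n then (if j < k then f ⟨j, h⟩ else 0) else 0) := by
    rw [← Fin.sum_univ_eq_sum_range]
    refine Finset.sum_congr rfl fun i _ => ?_
    simp [i.isLt]
  rw [h1]
  rw [← Finset.sum_subset (Finset.range_subset_range.2 hk)
    (fun j _ hj => by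
      have : ¬ j < k := fun h => hj (Finset.mem_range.2 h)
      simp [this])]
  refine Finset.sum_congr rfl fun j hj => ?_
  have hjk := Finset.mem_range.1 hj
  simp [hjk, lt_of_lt_of_le hjk hk]

private lemma sum_range_dite_eq_sum_univ {n : ℕ} (f : Fin n → ℝ) :
    ∑ j ∈ Finset.range n, (if h : j < n then f ⟨j, h⟩ else 0) = ∑ i, f i := by
  rw [← Fin.sum_univ_eq_sum_range (fun j => if h : j < n then f ⟨j, h⟩ else 0) n]
  exact Finset.sum_congr rfl fun i _ => by simp [i.isLt]

/-- Abel summation / majorization: if `d` is antitone and `y` is majorized by `x`,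
then `∑ d i * y i ≤ ∑ d i * x i`. -/
private lemma abel_le {n : ℕ} (x y d : Fin n → ℝ) (hd : Antitone d)
    (h1 : ∀ k : ℕ, k < n →
        ∑ i ∈ Finset.univ.filter (fun i : Fin n => (i : ℕ) < k), y i
          ≤ ∑ i ∈ Finset.univ.filter (fun i : Fin n => (i : ℕ) < k), x i)
    (h2 : ∑ i, y i = ∑ i, x i) :
    ∑ i, d i * y i ≤ ∑ i, d i * x i := by
  rcases Nat.eq_zero_or_pos n with hn | hn
  · subst hn; simp
  have hn1 : n - 1 < n := Nat.sub_lt hn one_pos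
  set g : ℕ → ℝ := fun j => if h : j < n then x ⟨j, h⟩ - y ⟨j, h⟩ else 0 with hg
  set D : ℕ → ℝ := fun j =>
    d ⟨min j (n - 1), lt_of_le_of_lt (min_le_right _ _) hn1⟩ with hDdef
  have hgsplit : ∀ j, g j = (if h : j < n then x ⟨j, h⟩ else 0)
      - (if h : j < n then y ⟨j, h⟩ else 0) := by
    intro j; by_cases h : j < n <;> simp [hg, h]
  have hGnonneg : ∀ k, k ≤ n → 0 ≤ ∑ j ∈ Finset.range k, g j := by
    intro k hk
    have : ∑ j ∈ Finset.range k, g j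
        = (∑ j ∈ Finset.range k, (if h : j < n then x ⟨j, h⟩ else 0))
          - (∑ j ∈ Finset.range k, (if h : j < n then y ⟨j, h⟩ else 0)) := by
      rw [← Finset.sum_sub_distrib]
      exact Finset.sum_congr rfl fun j _ => hgsplit j
    rw [this, ← sum_range_dite_eq_sum_filter x k hk, ← sum_range_dite_eq_sum_filter y k hk]
    by_cases hk' : k < n
    case neg =>
      have hkn : k = n := by omega
      have hfilt : Finset.univ.filter (fun i : Fin n => (i : ℕ) < k) = Finset.univ :=
        Finset.filter_true_of_mem fun i _ => by have := i.isLt; omega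
      rw [hfilt, h2]; simp
    case pos => linarith [h1 k hk']
  have hGn : ∑ j ∈ Finset.range n, g j = 0 := by
    have : ∑ j ∈ Finset.range n, g j
        = (∑ j ∈ Finset.range n, (if h : j < n then x ⟨j, h⟩ else 0))
          - (∑ j ∈ Finset.range n, (if h : j < n then y ⟨j, h⟩ else 0)) := by
      rw [← Finset.sum_sub_distrib]
      exact Finset.sum_congr rfl fun j _ => hgsplit j
    rw [this, sum_range_dite_eq_sum_univ, sum_range_dite_eq_sum_univ, h2]
    ring
  have key : 0 ≤ ∑ j ∈ Finset.range n, D j • g j := by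
    rw [Finset.sum_range_by_parts D g n, hGn, smul_zero, zero_sub, neg_nonneg]
    refine Finset.sum_nonpos fun j hj => ?_
    have hj' := Finset.mem_range.1 hj
    have hle : D (j + 1) ≤ D j := by
      apply hd
      exact Fin.mk_le_mk.2 (min_le_min (Nat.le_succ j) le_rfl)
    have hG : 0 ≤ ∑ i ∈ Finset.range (j + 1), g i := by
      apply hGnonneg
      omega
    have : D (j + 1) - D j ≤ 0 := by linarith
    simpa [smul_eq_mul] using mul_nonpos_of_nonpos_of_nonneg this hG
  have conv : ∑ i, d i * x i - ∑ i, d i * y i = ∑ j ∈ Finset.range n, D j • g j := by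
    rw [← Finset.sum_sub_distrib, ← Fin.sum_univ_eq_sum_range (fun j => D j • g j) n]
    refine Finset.sum_congr rfl fun i _ => ?_
    have hi : (i : ℕ) < n := i.isLt
    have hmk : (⟨min (i : ℕ) (n - 1), lt_of_le_of_lt (min_le_right _ _) hn1⟩ : Fin n) = i := by
      apply Fin.ext
      simp only []
      omega
    simp only [hDdef, hg, hi, dif_pos, hmk, smul_eq_mul]
    ring
  linarith
private lemma key_ineq {n : ℕ} (x y : Fin n → ℝ) (hx : Antitone x) (hy : Antitone y)
    (h1 : ∀ k : ℕ, k < n →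
        ∑ i ∈ Finset.univ.filter (fun i : Fin n => (i : ℕ) < k), y i
          ≤ ∑ i ∈ Finset.univ.filter (fun i : Fin n => (i : ℕ) < k), x i)
    (h2 : ∑ i, y i = ∑ i, x i) (c : Fin n → ℝ) :
    ∃ σ : Equiv.Perm (Fin n), ∑ i, c i * y i ≤ ∑ i, c i * x (σ⁻¹ i) := by
  classical
  set π := Tuple.sort (fun i => -c i) with hπ
  have hmono : Monotone ((fun i => -c i) ∘ π) := Tuple.monotone_sort _
  have hd : Antitone (fun j => c (π j)) := by
    intro a b hab
    have := hmono hab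
    simp only [Function.comp_apply, neg_le_neg_iff] at this
    exact this
  refine ⟨π, ?_⟩
  have e1 : ∑ i, c i * y i = ∑ j, c (π j) * y (π j) :=
    (Equiv.sum_comp π (fun i => c i * y i)).symm
  have e2 : ∑ i, c i * x (π⁻¹ i) = ∑ j, c (π j) * x j := by
    rw [← Equiv.sum_comp π (fun i => c i * x (π⁻¹ i))]
    simp
  have r1 : ∑ j, c (π j) * y (π j) ≤ ∑ j, c (π j) * y j :=
    Monovary.sum_mul_comp_perm_le_sum_mul (hd.monovary hy)
  have r2 := abel_le x y (fun j => c (π j)) hd h1 h2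
  rw [e1, e2]
  exact le_trans r1 r2

theorem stmt_13 (n : ℕ) (x y : Fin n → ℝ)
    (hx0 : ∀ i, 0 ≤ x i) (hy0 : ∀ i, 0 ≤ y i)
    (hx : Antitone x) (hy : Antitone y) :
    ((∀ k : ℕ, k < n →
        ∑ i ∈ Finset.univ.filter (fun i : Fin n => (i : ℕ) < k), y i
          ≤ ∑ i ∈ Finset.univ.filter (fun i : Fin n => (i : ℕ) < k), x i)
      ∧ ∑ i, y i = ∑ i, x i)
    ↔ y ∈ convexHull ℝ
        {z : Fin n → ℝ | ∃ σ : Equiv.Perm (Fin n), z = fun i => x (σ⁻¹ i)} := by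
  classical
  set S : Set (Fin n → ℝ) := {z : Fin n → ℝ | ∃ σ : Equiv.Perm (Fin n), z = fun i => x (σ⁻¹ i)}
    with hS
  constructor
  · rintro ⟨h1, h2⟩
    by_contra hmem
    have hSfin : S.Finite := by
      have : S = Set.range (fun σ : Equiv.Perm (Fin n) => fun i => x (σ⁻¹ i)) := by
        ext z
        simp [hS, Set.range, eq_comm]
      rw [this]
      exact Set.finite_range _
    have hclosed : IsClosed (convexHull ℝ S) := (hSfin.isCompact_convexHull ℝ).isClosed
    obtain ⟨f, u, hfa, hu⟩ :=
      geometric_hahn_banach_closed_point (convex_convexHull ℝ S) hclosed hmem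
    set c : Fin n → ℝ := fun i => f (Pi.single i 1) with hc
    have hf : ∀ z : Fin n → ℝ, f z = ∑ i, c i * z i := by
      intro z
      have hz : z = ∑ i, z i • (Pi.single i (1 : ℝ) : Fin n → ℝ) := by
        have := Finset.univ_sum_single z
        rw [← this]
        refine Finset.sum_congr rfl fun i _ => ?_
        ext j
        by_cases h : i = j <;> simp [h, Pi.single_apply]
      conv_lhs => rw [hz]
      rw [map_sum]
      refine Finset.sum_congr rfl fun i _ => ?_
      rw [map_smul, smul_eq_mul, mul_comm]
    obtain ⟨σ, hσ⟩ := key_ineq x y hx hy h1 h2 c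
    have hmem' : (fun i => x (σ⁻¹ i)) ∈ convexHull ℝ S :=
      subset_convexHull ℝ S ⟨σ, rfl⟩
    have hlt := hfa _ hmem'
    rw [hf] at hlt hu
    linarith
  · intro hmem
    set t : Set (Fin n → ℝ) := {w : Fin n → ℝ |
      (∀ k : ℕ, k < n →
        ∑ i ∈ Finset.univ.filter (fun i : Fin n => (i : ℕ) < k), w i
          ≤ ∑ i ∈ Finset.univ.filter (fun i : Fin n => (i : ℕ) < k), x i)
      ∧ ∑ i, w i = ∑ i, x i} with ht
    have htconv : Convex ℝ t := by
      intro w₁ hw₁ w₂ hw₂ a b ha hb hab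
      obtain ⟨hw₁a, hw₁b⟩ := hw₁
      obtain ⟨hw₂a, hw₂b⟩ := hw₂
      constructor
      · intro k hk
        have e : ∑ i ∈ Finset.univ.filter (fun i : Fin n => (i : ℕ) < k), (a • w₁ + b • w₂) i
            = a * ∑ i ∈ Finset.univ.filter (fun i : Fin n => (i : ℕ) < k), w₁ i
              + b * ∑ i ∈ Finset.univ.filter (fun i : Fin n => (i : ℕ) < k), w₂ i := by
          rw [Finset.mul_sum, Finset.mul_sum, ← Finset.sum_add_distrib]
          exact Finset.sum_congr rfl fun i _ => by simp [mul_comm]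
        rw [e]
        calc a * ∑ i ∈ Finset.univ.filter (fun i : Fin n => (i : ℕ) < k), w₁ i
              + b * ∑ i ∈ Finset.univ.filter (fun i : Fin n => (i : ℕ) < k), w₂ i
            ≤ a * ∑ i ∈ Finset.univ.filter (fun i : Fin n => (i : ℕ) < k), x i
              + b * ∑ i ∈ Finset.univ.filter (fun i : Fin n => (i : ℕ) < k), x i :=
              add_le_add (mul_le_mul_of_nonneg_left (hw₁a k hk) ha)
                (mul_le_mul_of_nonneg_left (hw₂a k hk) hb)
          _ = ∑ i ∈ Finset.univ.filter (fun i : Fin n => (i : ℕ) < k), x i := by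
              rw [← add_mul, hab, one_mul]
      · have e : ∑ i, (a • w₁ + b • w₂) i = a * ∑ i, w₁ i + b * ∑ i, w₂ i := by
          rw [Finset.mul_sum, Finset.mul_sum, ← Finset.sum_add_distrib]
          exact Finset.sum_congr rfl fun i _ => by simp [mul_comm]
        rw [e, hw₁b, hw₂b, ← add_mul, hab, one_mul]
    have hsub : S ⊆ t := by
      rintro z ⟨σ, rfl⟩
      constructor
      · intro k hk
        have hcanti : Antitone (fun i : Fin n => if (i : ℕ) < k then (1 : ℝ) else 0) := by
          intro a b hab
          dsimp only
          by_cases h1 : (b : ℕ) < k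
          · have h2 : (a : ℕ) < k := lt_of_le_of_lt (by exact_mod_cast hab) h1
            simp [h1, h2]
          · by_cases h2 : (a : ℕ) < k <;> simp [h1, h2]
        have hre := Monovary.sum_mul_comp_perm_le_sum_mul
          (σ := σ⁻¹) (hcanti.monovary hx)
        calc ∑ i ∈ Finset.univ.filter (fun i : Fin n => (i : ℕ) < k), x (σ⁻¹ i)
            = ∑ i : Fin n, (if (i : ℕ) < k then (1 : ℝ) else 0) * x (σ⁻¹ i) := by
              rw [Finset.sum_filter]
              exact Finset.sum_congr rfl fun i _ => by
                by_cases h : (i : ℕ) < k <;> simp [h]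
          _ ≤ ∑ i : Fin n, (if (i : ℕ) < k then (1 : ℝ) else 0) * x i := hre
          _ = ∑ i ∈ Finset.univ.filter (fun i : Fin n => (i : ℕ) < k), x i := by
              rw [Finset.sum_filter]
              exact Finset.sum_congr rfl fun i _ => by
                by_cases h : (i : ℕ) < k <;> simp [h]
      · exact Equiv.sum_comp σ⁻¹ x
    exact convexHull_min hsub htconv hmem
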